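/- Let S : [0,1] × {0,1} → ℝ be a strictly proper scoring rule that is L-Lipschitz in its first argument, let m ≥ 1 be a natural number, and let q ∈ [0,1]. Let 𝒮^m_approach = {(x, z) ∈ ℝ^{m+1} × ℝ : ‖x‖₁ ≤ 1/m and z ≤ 4L/m²}, and let a ∈ ℝ^{m+1}, b ∈ ℝ, θ ∈ ℝ be such that the halfspace H = {(x, z) : ⟨a, x⟩ + b·z ≤ θ} contains 𝒮^m_approach. Then there exists a probability vector w ∈ Δ_{m+1} such that for every y ∈ {0,1}: ∑_{i=0}^{m} a_i · w_i · (y − i/m) + b · ∑_{i=0}^{m} w_i · (S(i/m, y) − S(q, y)) ≤ θ. -/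

import Mathlib

/-- The affine extension of a scoring rule `S : [0,1] × {0,1} → ℝ` to
`S̄(x, p) = (1−p)·S(x,0) + p·S(x,1)`. -/
noncomputable def Sbar (S : ℝ → Fin 2 → ℝ) (x p : ℝ) : ℝ :=
  (1 - p) * S x 0 + p * S x 1

/-- A scoring rule is strictly proper if truthfully reporting uniquely minimizes
the expected score. -/
def StrictlyProperScoringRule (S : ℝ → Fin 2 → ℝ) : Prop :=
  ∀ p ∈ Set.Icc (0:ℝ) 1, ∀ x ∈ Set.Icc (0:ℝ) 1,
    Sbar S p p ≤ Sbar S x p ∧ (x ≠ p → Sbar S p p < Sbar S x p)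

/-- `S` is `L`-Lipschitz in its first argument on `[0,1]`. -/
def LipschitzScoringRule (S : ℝ → Fin 2 → ℝ) (L : ℝ) : Prop :=
  ∀ x ∈ Set.Icc (0:ℝ) 1, ∀ x' ∈ Set.Icc (0:ℝ) 1, ∀ y : Fin 2,
    |S x y - S x' y| ≤ L * |x - x'|

/-- auxiliary: divergence bound for proper Lipschitz scoring rules -/
theorem sbar_div_bound (S : ℝ → Fin 2 → ℝ) (L : ℝ)
    (hproper : StrictlyProperScoringRule S) (hlip : LipschitzScoringRule S L)
    (x : ℝ) (hx : x ∈ Set.Icc (0:ℝ) 1) (t : ℝ) (ht : t ∈ Set.Icc (0:ℝ) 1) :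
    Sbar S x t - Sbar S t t ≤ 2 * L * (x - t)^2 := by
  have hp := (hproper x hx t ht).1
  have h1 := hlip x hx t ht 1
  have h0 := hlip x hx t ht 0
  have e0 : (x - t) * (S x 0 - S t 0) ≤ L * (x - t)^2 := by
    calc (x - t) * (S x 0 - S t 0) ≤ |(x - t) * (S x 0 - S t 0)| := le_abs_self _
      _ = |x - t| * |S x 0 - S t 0| := abs_mul _ _
      _ ≤ |x - t| * (L * |x - t|) := mul_le_mul_of_nonneg_left h0 (abs_nonneg _)
      _ = L * |x - t|^2 := by ring
      _ = L * (x - t)^2 := by rw [sq_abs]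
  have e1 : -((x - t) * (S x 1 - S t 1)) ≤ L * (x - t)^2 := by
    calc -((x - t) * (S x 1 - S t 1)) ≤ |(x - t) * (S x 1 - S t 1)| := neg_le_abs _
      _ = |x - t| * |S x 1 - S t 1| := abs_mul _ _
      _ ≤ |x - t| * (L * |x - t|) := mul_le_mul_of_nonneg_left h1 (abs_nonneg _)
      _ = L * |x - t|^2 := by ring
      _ = L * (x - t)^2 := by rw [sq_abs]
  simp only [Sbar] at hp ⊢
  nlinarith [hp, e0, e1]

/-- auxiliary: single-round payoff of forecasting `i/m` against outcome `y`. -/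
noncomputable def gpay (S : ℝ → Fin 2 → ℝ) (q : ℝ) (m : ℕ) (a : Fin (m+1) → ℝ) (b : ℝ)
    (i : Fin (m+1)) (y : Fin 2) : ℝ :=
  a i * ((y : ℕ) - (i : ℕ) / (m : ℝ)) + b * (S ((i : ℕ) / (m : ℝ)) y - S q y)

set_option maxHeartbeats 1000000 in
/-- Theorem 3.1 of the paper (halfspace satisfiability): every halfspace `H`
containing the target set `𝒮^m_approach` admits a mixed forecast whose expected
payoff vector lies in `H`, for every outcome `y ∈ {0,1}`. -/
theorem stmt7 (S : ℝ → Fin 2 → ℝ) (L : ℝ)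
    (hproper : StrictlyProperScoringRule S) (hlip : LipschitzScoringRule S L)
    (m : ℕ) (hm : 1 ≤ m) (q : ℝ) (hq : q ∈ Set.Icc (0:ℝ) 1)
    (a : Fin (m+1) → ℝ) (b θ : ℝ)
    (hH : {p : (Fin (m+1) → ℝ) × ℝ |
            (∑ i, |p.1 i|) ≤ 1 / (m : ℝ) ∧ p.2 ≤ 4 * L / m ^ 2} ⊆
          {p : (Fin (m+1) → ℝ) × ℝ | (∑ i, a i * p.1 i) + b * p.2 ≤ θ}) :
    ∃ w : Fin (m+1) → ℝ, (∀ i, 0 ≤ w i) ∧ (∑ i, w i = 1) ∧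
      ∀ y : Fin 2,
        (∑ i : Fin (m+1), a i * w i * ((y : ℕ) - (i : ℕ) / (m : ℝ))) +
            b * ∑ i : Fin (m+1), w i * (S ((i : ℕ) / (m : ℝ)) y - S q y)
          ≤ θ := by
  classical
  have hm0 : (0:ℝ) < m := by exact_mod_cast hm
  have hL : 0 ≤ L := by
    have h := hlip 0 (by norm_num) 1 (by norm_num) 0
    rw [show |(0:ℝ) - 1| = 1 by norm_num, mul_one] at h
    exact le_trans (abs_nonneg _) h
  -- b is nonnegative
  have hb : 0 ≤ b := by
    by_contra hbneg
    push_neg at hbneg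
    set z : ℝ := min (4*L/m^2) ((θ+1)/b) with hz
    have hmem := hH (a := (fun _ => 0, z)) ⟨by simp [le_of_lt (by positivity : (0:ℝ) < 1/(m:ℝ))], min_le_left _ _⟩
    simp only [Set.mem_setOf_eq, mul_zero, Finset.sum_const_zero, zero_add] at hmem
    have hz2 : z ≤ (θ+1)/b := min_le_right _ _
    have : θ + 1 ≤ b * z := by
      have h := mul_le_mul_of_nonpos_left hz2 hbneg.le
      rwa [mul_div_cancel₀ _ (ne_of_lt hbneg)] at h
    linarith
  -- per-coordinate bound
  have hcoord : ∀ i : Fin (m+1), |a i| / m + b * (4*L/m^2) ≤ θ := by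
    intro i
    set c : ℝ := if 0 ≤ a i then 1/(m:ℝ) else -(1/(m:ℝ)) with hc
    have habs : |c| = 1/(m:ℝ) := by
      rw [hc]; split_ifs
      · exact abs_of_nonneg (by positivity)
      · rw [abs_neg]; exact abs_of_nonneg (by positivity)
    have hmem := hH (a := (fun j => if j = i then c else 0, 4*L/m^2)) ⟨?_, le_refl _⟩
    · simp only [Set.mem_setOf_eq] at hmem
      have hsum : (∑ j, a j * (if j = i then c else 0)) = a i * c := by
        rw [Finset.sum_congr rfl (fun j _ => by rw [mul_ite, mul_zero]),
          Finset.sum_ite_eq' Finset.univ i (fun j => a j * c), if_pos (Finset.mem_univ i)]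
      rw [hsum] at hmem
      have hac : a i * c = |a i| / m := by
        rw [hc]; split_ifs with h
        · rw [abs_of_nonneg h]; ring
        · rw [abs_of_neg (lt_of_not_ge h)]; ring
      rwa [hac] at hmem
    · simp only [Set.mem_setOf_eq]
      have : ∀ j : Fin (m+1), |if j = i then c else 0| = if j = i then |c| else 0 := by
        intro j; split_ifs <;> simp
      rw [Finset.sum_congr rfl (fun j _ => this j),
        Finset.sum_ite_eq' Finset.univ i (fun _ => |c|), if_pos (Finset.mem_univ i), habs]
  -- grid points are in [0,1]
  have hgrid : ∀ i : Fin (m+1), ((i:ℕ):ℝ)/m ∈ Set.Icc (0:ℝ) 1 := by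
    intro i
    constructor
    · positivity
    · rw [div_le_one hm0]
      exact_mod_cast Nat.le_of_lt_succ i.isLt
  -- key pointwise bound
  have hkey : ∀ (i : Fin (m+1)) (t : ℝ), t ∈ Set.Icc (0:ℝ) 1 → |t - (i:ℕ)/(m:ℝ)| ≤ 1/m →
      (1-t) * gpay S q m a b i 0 + t * gpay S q m a b i 1 ≤ θ := by
    intro i t ht hdist
    have hid : (1-t) * gpay S q m a b i 0 + t * gpay S q m a b i 1
        = a i * (t - (i:ℕ)/(m:ℝ)) + b * (Sbar S ((i:ℕ)/(m:ℝ)) t - Sbar S q t) := by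
      simp only [gpay, Sbar, Fin.val_zero, Fin.val_one, Nat.cast_zero, Nat.cast_one]
      ring
    rw [hid]
    have h1 : a i * (t - (i:ℕ)/(m:ℝ)) ≤ |a i| * (1/m) := by
      calc a i * (t - (i:ℕ)/(m:ℝ)) ≤ |a i * (t - (i:ℕ)/(m:ℝ))| := le_abs_self _
        _ = |a i| * |t - (i:ℕ)/(m:ℝ)| := abs_mul _ _
        _ ≤ |a i| * (1/m) := mul_le_mul_of_nonneg_left hdist (abs_nonneg _)
    have h2 : Sbar S ((i:ℕ)/(m:ℝ)) t - Sbar S t t ≤ 2*L*(1/m)^2 := by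
      have hd := sbar_div_bound S L hproper hlip _ (hgrid i) t ht
      have hsq : ((i:ℕ)/(m:ℝ) - t)^2 ≤ (1/(m:ℝ))^2 := by
        rw [← sq_abs ((i:ℕ)/(m:ℝ) - t)]
        apply pow_le_pow_left₀ (abs_nonneg _) _ 2
        rwa [abs_sub_comm] at hdist
      nlinarith [hd, hsq, hL]
    have h3 : Sbar S t t ≤ Sbar S q t := (hproper t ht q hq).1
    have h4 : b * (Sbar S ((i:ℕ)/(m:ℝ)) t - Sbar S q t) ≤ b * (2*L/m^2) := by
      apply mul_le_mul_of_nonneg_left _ hb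
      have : 2*L*(1/(m:ℝ))^2 = 2*L/m^2 := by field_simp
      linarith [h2, h3]
    have h5 := hcoord i
    have h6 : b * (2*L/m^2) ≤ b * (4*L/m^2) := by
      apply mul_le_mul_of_nonneg_left _ hb
      gcongr
      linarith
    have h7 : |a i| * (1/(m:ℝ)) = |a i| / m := by ring
    linarith
  -- at each grid point, at least one outcome is fine
  have hmin : ∀ i : Fin (m+1), gpay S q m a b i 0 ≤ θ ∨ gpay S q m a b i 1 ≤ θ := by
    intro i
    by_contra hcon
    push_neg at hcon
    obtain ⟨hu, hv⟩ := hcon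
    have hkk := hkey i ((i:ℕ)/(m:ℝ)) (hgrid i) (by rw [sub_self, abs_zero]; positivity)
    have hs0 := (hgrid i).1
    have hs1 := (hgrid i).2
    rcases le_total (gpay S q m a b i 0) (gpay S q m a b i 1) with h | h
    · nlinarith [mul_nonneg hs0 (sub_nonneg.2 h)]
    · nlinarith [mul_nonneg (by linarith : (0:ℝ) ≤ 1 - (i:ℕ)/(m:ℝ)) (sub_nonneg.2 h)]
  -- endpoints
  have h00 : gpay S q m a b 0 0 ≤ θ := by
    have h := hkey 0 0 (by norm_num) (by
      rw [show ((((0:Fin (m+1)):ℕ)):ℝ) = 0 by simp, zero_div, sub_self, abs_zero]; positivity)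
    simpa using h
  have hlast1 : gpay S q m a b (Fin.last m) 1 ≤ θ := by
    have h := hkey (Fin.last m) 1 (by norm_num) ?_
    · simpa using h
    · simp [Fin.val_last, div_self hm0.ne']
  by_cases hboth : ∃ i, gpay S q m a b i 0 ≤ θ ∧ gpay S q m a b i 1 ≤ θ
  · -- a single grid point works
    obtain ⟨K, hK0, hK1⟩ := hboth
    refine ⟨fun j => if j = K then 1 else 0, fun i => by by_cases h : i = K <;> simp [h], by
      beta_reduce
      rw [Finset.sum_ite_eq' Finset.univ K (fun _ => (1:ℝ)), if_pos (Finset.mem_univ K)], ?_⟩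
    intro y
    beta_reduce
    have hred1 : (∑ i : Fin (m+1), a i * (if i = K then (1:ℝ) else 0) * ((y : ℕ) - (i : ℕ) / (m : ℝ)))
        = a K * ((y : ℕ) - (K : ℕ) / (m : ℝ)) := by
      have he : ∀ j : Fin (m+1), a j * (if j = K then (1:ℝ) else 0) * ((y : ℕ) - (j : ℕ) / (m : ℝ))
          = if j = K then a j * ((y : ℕ) - (j : ℕ) / (m : ℝ)) else 0 := by
        intro j; split_ifs <;> ring
      rw [Finset.sum_congr rfl (fun j _ => he j),
        Finset.sum_ite_eq' Finset.univ K (fun i => a i * ((y : ℕ) - (i : ℕ) / (m : ℝ))),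
        if_pos (Finset.mem_univ K)]
    have hred2 : (∑ i : Fin (m+1), (if i = K then (1:ℝ) else 0) * (S ((i : ℕ) / (m : ℝ)) y - S q y))
        = S ((K : ℕ) / (m : ℝ)) y - S q y := by
      have he : ∀ j : Fin (m+1), (if j = K then (1:ℝ) else 0) * (S ((j : ℕ) / (m : ℝ)) y - S q y)
          = if j = K then S ((j : ℕ) / (m : ℝ)) y - S q y else 0 := by
        intro j; split_ifs <;> ring
      rw [Finset.sum_congr rfl (fun j _ => he j),
        Finset.sum_ite_eq' Finset.univ K (fun i => S ((i : ℕ) / (m : ℝ)) y - S q y),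
        if_pos (Finset.mem_univ K)]
    rw [hred1, hred2]
    have : gpay S q m a b K y ≤ θ := by
      fin_cases y
      · exact hK0
      · exact hK1
    simpa [gpay] using this
  · -- crossing pair
    push_neg at hboth
    have hlast0 : θ < gpay S q m a b (Fin.last m) 0 := by
      by_contra h
      push_neg at h
      exact absurd hlast1 (not_le.2 (hboth _ h))
    -- discrete IVT via Nat.find
    have hex : ∃ n : ℕ, θ < gpay S q m a b ⟨min n m, Nat.lt_succ_of_le (min_le_right n m)⟩ 0 := by
      refine ⟨m, ?_⟩
      have e : (⟨min m m, Nat.lt_succ_of_le (min_le_right m m)⟩ : Fin (m+1)) = Fin.last m :=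
        Fin.ext (by simp [Fin.val_last])
      rw [e]
      exact hlast0
    set N := Nat.find hex with hN
    have hNspec := Nat.find_spec hex
    have hNle : N ≤ m := Nat.find_le (by
      have e : (⟨min m m, Nat.lt_succ_of_le (min_le_right m m)⟩ : Fin (m+1)) = Fin.last m :=
        Fin.ext (by simp [Fin.val_last])
      rw [e]
      exact hlast0)
    have hNpos : 0 < N := by
      rcases Nat.eq_zero_or_pos N with h | h
      · exfalso
        have e : (⟨min 0 m, Nat.lt_succ_of_le (min_le_right 0 m)⟩ : Fin (m+1)) = 0 :=
          Fin.ext (by simp)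
        rw [← hN, h, e] at hNspec
        linarith [h00]
      · exact h
    set k := N - 1 with hk
    have hkm : k < m := by omega
    set K : Fin (m+1) := ⟨k, by omega⟩ with hK
    set K1 : Fin (m+1) := ⟨k+1, by omega⟩ with hK1
    have hu : gpay S q m a b K 0 ≤ θ := by
      have hlt : k < N := by omega
      have hfind := Nat.find_min hex (by rw [← hN]; exact hlt)
      push_neg at hfind
      have e : (⟨min k m, Nat.lt_succ_of_le (min_le_right k m)⟩ : Fin (m+1)) = K := by
        rw [hK]
        exact Fin.ext (by simp; omega)
      rwa [e] at hfind
    have hu' : θ < gpay S q m a b K1 0 := by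
      have e : (⟨min N m, Nat.lt_succ_of_le (min_le_right N m)⟩ : Fin (m+1)) = K1 := by
        rw [hK1]
        exact Fin.ext (by simp; omega)
      rw [← hN, e] at hNspec
      exact hNspec
    have hv : θ < gpay S q m a b K 1 := hboth K hu
    have hv' : gpay S q m a b K1 1 ≤ θ := by
      rcases hmin K1 with h | h
      · linarith
      · exact h
    -- the two convex-combination inequalities at t = k/m
    set t : ℝ := (k:ℝ)/m with htdef
    have htK : (K:ℕ) = k := rfl
    have htK1 : (K1:ℕ) = k+1 := rfl
    have ht01 : t ∈ Set.Icc (0:ℝ) 1 := by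
      rw [htdef]
      constructor
      · positivity
      · rw [div_le_one hm0]; exact_mod_cast hkm.le
    have hA : (1-t) * gpay S q m a b K 0 + t * gpay S q m a b K 1 ≤ θ := by
      apply hkey K t ht01
      rw [htK, htdef, sub_self, abs_zero]
      positivity
    have hB : (1-t) * gpay S q m a b K1 0 + t * gpay S q m a b K1 1 ≤ θ := by
      apply hkey K1 t ht01
      rw [htK1, htdef]
      have : (k:ℝ)/m - ((k:ℕ)+1:ℝ)/m = -(1/m) := by field_simp; ring
      push_cast
      rw [this, abs_neg, abs_of_nonneg (by positivity)]
    set u : ℝ := gpay S q m a b K 0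
    set v : ℝ := gpay S q m a b K 1
    set u' : ℝ := gpay S q m a b K1 0
    set v' : ℝ := gpay S q m a b K1 1
    set D : ℝ := (u' - v') + (v - u) with hD
    have hDpos : 0 < D := by rw [hD]; linarith
    set lam : ℝ := (u' - v') / D with hlam
    clear_value t
    have hlam0 : 0 ≤ lam := by
      apply div_nonneg _ hDpos.le
      linarith
    have hlam1 : lam ≤ 1 := by
      rw [hlam, div_le_one hDpos]
      linarith
    have hlamv : lam * v + (1 - lam) * v' = lam * u + (1 - lam) * u' := by
      rw [hlam]
      field_simp
      ring
    have hV : lam * u + (1 - lam) * u' ≤ θ := by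
      have lA := mul_le_mul_of_nonneg_left hA hlam0
      have lB := mul_le_mul_of_nonneg_left hB (by linarith : (0:ℝ) ≤ 1 - lam)
      have h0 : lam * (u - v) + (1 - lam) * (u' - v') = 0 := by linarith
      have h0t : t * (lam * (u - v) + (1 - lam) * (u' - v')) = 0 := by rw [h0, mul_zero]
      linarith [lA, lB, h0t]
    have hV' : lam * v + (1 - lam) * v' ≤ θ := by rw [hlamv]; exact hV
    have hKne : K ≠ K1 := by
      rw [Fin.ne_iff_vne]; simp [hK, hK1]
    refine ⟨fun j => (if j = K then lam else 0) + (if j = K1 then 1 - lam else 0), ?_, ?_, ?_⟩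
    · intro i
      beta_reduce
      apply add_nonneg <;> (split_ifs <;> try simp [hlam0]) <;> linarith
    · beta_reduce
      rw [Finset.sum_add_distrib,
        Finset.sum_ite_eq' Finset.univ K (fun _ => lam), if_pos (Finset.mem_univ K),
        Finset.sum_ite_eq' Finset.univ K1 (fun _ => 1 - lam), if_pos (Finset.mem_univ K1)]
      ring
    · intro y
      beta_reduce
      have key : lam * gpay S q m a b K y + (1 - lam) * gpay S q m a b K1 y ≤ θ := by
        fin_cases y
        · exact hV
        · exact hV'
      have hred1 : (∑ i : Fin (m+1), a i * ((if i = K then lam else 0) + (if i = K1 then 1 - lam else 0)) * ((y : ℕ) - (i : ℕ) / (m : ℝ)))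
          = a K * lam * ((y : ℕ) - (K : ℕ) / (m : ℝ)) + a K1 * (1 - lam) * ((y : ℕ) - (K1 : ℕ) / (m : ℝ)) := by
        have he0 : ∀ j : Fin (m+1), a j * ((if j = K then lam else 0) + (if j = K1 then 1 - lam else 0)) * ((y : ℕ) - (j : ℕ) / (m : ℝ))
            = a j * (if j = K then lam else 0) * ((y : ℕ) - (j : ℕ) / (m : ℝ))
              + a j * (if j = K1 then 1 - lam else 0) * ((y : ℕ) - (j : ℕ) / (m : ℝ)) := by
          intro j; ring
        rw [Finset.sum_congr rfl (fun j _ => he0 j), Finset.sum_add_distrib]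
        congr 1
        · have he : ∀ j : Fin (m+1), a j * (if j = K then lam else 0) * ((y : ℕ) - (j : ℕ) / (m : ℝ))
              = if j = K then a j * lam * ((y : ℕ) - (j : ℕ) / (m : ℝ)) else 0 := by
            intro j; split_ifs <;> ring
          rw [Finset.sum_congr rfl (fun j _ => he j),
            Finset.sum_ite_eq' Finset.univ K (fun i => a i * lam * ((y : ℕ) - (i : ℕ) / (m : ℝ))),
            if_pos (Finset.mem_univ K)]
        · have he : ∀ j : Fin (m+1), a j * (if j = K1 then 1 - lam else 0) * ((y : ℕ) - (j : ℕ) / (m : ℝ))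
              = if j = K1 then a j * (1 - lam) * ((y : ℕ) - (j : ℕ) / (m : ℝ)) else 0 := by
            intro j; split_ifs <;> ring
          rw [Finset.sum_congr rfl (fun j _ => he j),
            Finset.sum_ite_eq' Finset.univ K1 (fun i => a i * (1-lam) * ((y : ℕ) - (i : ℕ) / (m : ℝ))),
            if_pos (Finset.mem_univ K1)]
      have hred2 : (∑ i : Fin (m+1), ((if i = K then lam else 0) + (if i = K1 then 1 - lam else 0)) * (S ((i : ℕ) / (m : ℝ)) y - S q y))
          = lam * (S ((K : ℕ) / (m : ℝ)) y - S q y) + (1 - lam) * (S ((K1 : ℕ) / (m : ℝ)) y - S q y) := by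
        have he0 : ∀ j : Fin (m+1), ((if j = K then lam else 0) + (if j = K1 then 1 - lam else 0)) * (S ((j : ℕ) / (m : ℝ)) y - S q y)
            = (if j = K then lam else 0) * (S ((j : ℕ) / (m : ℝ)) y - S q y)
              + (if j = K1 then 1 - lam else 0) * (S ((j : ℕ) / (m : ℝ)) y - S q y) := by
          intro j; ring
        rw [Finset.sum_congr rfl (fun j _ => he0 j), Finset.sum_add_distrib]
        congr 1
        · have he : ∀ j : Fin (m+1), (if j = K then lam else 0) * (S ((j : ℕ) / (m : ℝ)) y - S q y)
              = if j = K then lam * (S ((j : ℕ) / (m : ℝ)) y - S q y) else 0 := by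
            intro j; split_ifs <;> ring
          rw [Finset.sum_congr rfl (fun j _ => he j),
            Finset.sum_ite_eq' Finset.univ K (fun i => lam * (S ((i : ℕ) / (m : ℝ)) y - S q y)),
            if_pos (Finset.mem_univ K)]
        · have he : ∀ j : Fin (m+1), (if j = K1 then 1 - lam else 0) * (S ((j : ℕ) / (m : ℝ)) y - S q y)
              = if j = K1 then (1 - lam) * (S ((j : ℕ) / (m : ℝ)) y - S q y) else 0 := by
            intro j; split_ifs <;> ring
          rw [Finset.sum_congr rfl (fun j _ => he j),
            Finset.sum_ite_eq' Finset.univ K1 (fun i => (1-lam) * (S ((i : ℕ) / (m : ℝ)) y - S q y)),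
            if_pos (Finset.mem_univ K1)]
      have hEq : (a K * lam * ((y : ℕ) - (K : ℕ) / (m : ℝ)) + a K1 * (1 - lam) * ((y : ℕ) - (K1 : ℕ) / (m : ℝ)))
          + b * (lam * (S ((K : ℕ) / (m : ℝ)) y - S q y) + (1 - lam) * (S ((K1 : ℕ) / (m : ℝ)) y - S q y))
          = lam * gpay S q m a b K y + (1 - lam) * gpay S q m a b K1 y := by
        simp only [gpay]; ring
      rw [hred1, hred2, hEq]
      exact key
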